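/- Relative smoothness of the Poisson log-likelihood: f(x) = KL(b, Ax) = Σᵢ bᵢ ln(bᵢ/(Ax)ᵢ) − Σᵢ(bᵢ − (Ax)ᵢ) is ‖b‖₁-smooth relative to the log-barrier φ(x) = −Σⱼ ln xⱼ on ℝⁿ_{++}, i.e., ‖b‖₁·φ − f is convex on ℝⁿ_{++}. -/

import Mathlib

open Matrix Finset

-- convexity of the positive orthant
lemma convex_posOrthant (n : ℕ) : Convex ℝ {x : Fin n → ℝ | ∀ j, 0 < x j} := by
  intro x hx y hy a b ha hb hab
  intro j
  simp only [Pi.add_apply, Pi.smul_apply, smul_eq_mul]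
  rcases ha.eq_or_lt with rfl | ha'
  · simpa using by have : b = 1 := by linarith
                   simpa [this] using hy j
  · have : 0 ≤ b * y j := mul_nonneg hb (hy j).le
    have := mul_pos ha' (hx j)
    linarith

-- sum of convex functions
lemma convexOn_finset_sum {ι E : Type*} [AddCommGroup E] [Module ℝ E]
    {s : Set E} (hs : Convex ℝ s) (t : Finset ι) (f : ι → E → ℝ)
    (h : ∀ i ∈ t, ConvexOn ℝ s (f i)) : ConvexOn ℝ s (fun x => ∑ i ∈ t, f i x) := by
  induction t using Finset.cons_induction with
  | empty => simpa using convexOn_const 0 hs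
  | cons i t hi ih =>
    simp only [Finset.sum_cons]
    exact (h i (Finset.mem_cons_self _ _)).add (ih fun j hj => h j (Finset.mem_cons.2 (Or.inr hj)))

-- two-function Hölder inequality
lemma holder2 {ι : Type*} (t : Finset ι) (u v : ι → ℝ) {p q : ℝ}
    (hu : ∀ i ∈ t, 0 ≤ u i) (hv : ∀ i ∈ t, 0 ≤ v i)
    (hU : 0 < ∑ i ∈ t, u i) (hV : 0 < ∑ i ∈ t, v i)
    (hp : 0 < p) (hq : 0 < q) (hpq : p + q = 1) :
    ∑ i ∈ t, u i ^ p * v i ^ q ≤ (∑ i ∈ t, u i) ^ p * (∑ i ∈ t, v i) ^ q := by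
  set U := ∑ i ∈ t, u i
  set V := ∑ i ∈ t, v i
  have hUV : 0 < U ^ p * V ^ q :=
    mul_pos (Real.rpow_pos_of_pos hU p) (Real.rpow_pos_of_pos hV q)
  have key : ∀ i ∈ t, u i ^ p * v i ^ q ≤ (p * (u i / U) + q * (v i / V)) * (U ^ p * V ^ q) := by
    intro i hi
    have amgm : (u i / U) ^ p * (v i / V) ^ q ≤ p * (u i / U) + q * (v i / V) :=
      Real.geom_mean_le_arith_mean2_weighted hp.le hq.le
        (div_nonneg (hu i hi) hU.le) (div_nonneg (hv i hi) hV.le) hpq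
    have h1 : (u i / U) ^ p * (v i / V) ^ q * (U ^ p * V ^ q) = u i ^ p * v i ^ q := by
      rw [Real.div_rpow (hu i hi) hU.le, Real.div_rpow (hv i hi) hV.le]
      field_simp
    calc u i ^ p * v i ^ q = (u i / U) ^ p * (v i / V) ^ q * (U ^ p * V ^ q) := h1.symm
      _ ≤ (p * (u i / U) + q * (v i / V)) * (U ^ p * V ^ q) := by
          exact mul_le_mul_of_nonneg_right amgm hUV.le
  calc ∑ i ∈ t, u i ^ p * v i ^ q
      ≤ ∑ i ∈ t, (p * (u i / U) + q * (v i / V)) * (U ^ p * V ^ q) :=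
        Finset.sum_le_sum key
    _ = (p * (U / U) + q * (V / V)) * (U ^ p * V ^ q) := by
        rw [← Finset.sum_mul]
        congr 1
        rw [Finset.sum_add_distrib, ← Finset.mul_sum, ← Finset.mul_sum, ← Finset.sum_div,
          ← Finset.sum_div]
    _ = U ^ p * V ^ q := by
        rw [div_self hU.ne', div_self hV.ne']
        rw [mul_one, mul_one, hpq, one_mul]

-- key convexity lemma
lemma key_convex {n : ℕ} (a : Fin n → ℝ) (ha : ∀ j, 0 ≤ a j) (hne : ∃ j, a j ≠ 0) :
    ConvexOn ℝ {x : Fin n → ℝ | ∀ j, 0 < x j}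
      (fun x => Real.log (∑ j, a j * x j) - ∑ j, Real.log (x j)) := by
  set s : Set (Fin n → ℝ) := {x | ∀ j, 0 < x j} with hs_def
  have hs : Convex ℝ s := convex_posOrthant n
  obtain ⟨j0, hj0⟩ := hne
  have ha0 : 0 < a j0 := (ha j0).lt_of_ne (Ne.symm hj0)
  set S : (Fin n → ℝ) → ℝ := fun x => ∑ j, a j * ∏ k ∈ univ.erase j, (x k)⁻¹ with hS_def
  -- positivity of S
  have hSnn : ∀ x ∈ s, ∀ j, (0:ℝ) ≤ a j * ∏ k ∈ univ.erase j, (x k)⁻¹ := by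
    intro x hx j
    exact mul_nonneg (ha j) (Finset.prod_nonneg fun k _ => (inv_nonneg.2 (hx k).le))
  have hSpos : ∀ x ∈ s, 0 < S x := by
    intro x hx
    refine Finset.sum_pos' (fun j _ => hSnn x hx j) ⟨j0, Finset.mem_univ _, ?_⟩
    exact mul_pos ha0 (Finset.prod_pos fun k _ => inv_pos.2 (hx k))
  have haxpos : ∀ x ∈ s, (0:ℝ) < ∑ j, a j * x j := by
    intro x hx
    exact Finset.sum_pos' (fun j _ => mul_nonneg (ha j) (hx j).le)
      ⟨j0, Finset.mem_univ _, mul_pos ha0 (hx j0)⟩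
  -- identity on s
  have hid : ∀ x ∈ s, Real.log (S x) = Real.log (∑ j, a j * x j) - ∑ j, Real.log (x j) := by
    intro x hx
    have hprod : ∀ j : Fin n, ∏ k ∈ univ.erase j, (x k)⁻¹ = x j * ∏ k, (x k)⁻¹ := by
      intro j
      have h := Finset.mul_prod_erase Finset.univ (fun k => (x k)⁻¹) (Finset.mem_univ j)
      have hP : ∏ k ∈ univ.erase j, x k ≠ 0 :=
        (Finset.prod_pos fun k _ => hx k).ne'
      rw [← h]
      field_simp [(hx j).ne', hP]
    have hSx : S x = (∑ j, a j * x j) * ∏ k, (x k)⁻¹ := by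
      rw [hS_def]
      simp only
      rw [Finset.sum_mul]
      exact Finset.sum_congr rfl fun j _ => by rw [hprod j]; ring
    rw [hSx, Real.log_mul (haxpos x hx).ne'
        (Finset.prod_pos fun k _ => inv_pos.2 (hx k)).ne',
      Real.log_prod (fun k _ => (inv_pos.2 (hx k)).ne')]
    simp [Real.log_inv]
    ring
  -- convexity of log ∘ S
  have hconv : ConvexOn ℝ s (fun x => Real.log (S x)) := by
    rw [convexOn_iff_forall_pos]
    refine ⟨hs, ?_⟩
    intro x hx y hy p q hp hq hpq
    have hz : p • x + q • y ∈ s := hs hx hy hp.le hq.le hpq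
    -- pointwise bound on inverses
    have h1 : ∀ k : Fin n, ((p • x + q • y) k)⁻¹ ≤ ((x k)⁻¹) ^ p * ((y k)⁻¹) ^ q := by
      intro k
      have amgm : (x k) ^ p * (y k) ^ q ≤ p * x k + q * y k :=
        Real.geom_mean_le_arith_mean2_weighted hp.le hq.le (hx k).le (hy k).le hpq
      have hpos : 0 < (x k) ^ p * (y k) ^ q :=
        mul_pos (Real.rpow_pos_of_pos (hx k) p) (Real.rpow_pos_of_pos (hy k) q)
      have h2 : ((p • x + q • y) k)⁻¹ ≤ ((x k) ^ p * (y k) ^ q)⁻¹ := by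
        have : (p • x + q • y) k = p * x k + q * y k := by
          simp [Pi.add_apply, Pi.smul_apply, smul_eq_mul]
        rw [this]
        exact inv_anti₀ hpos amgm
      calc ((p • x + q • y) k)⁻¹ ≤ ((x k) ^ p * (y k) ^ q)⁻¹ := h2
        _ = ((x k)⁻¹) ^ p * ((y k)⁻¹) ^ q := by
            rw [mul_inv, Real.inv_rpow (hx k).le, Real.inv_rpow (hy k).le]
    -- termwise bound
    have hterm : ∀ j : Fin n,
        a j * ∏ k ∈ univ.erase j, (((p • x + q • y) k))⁻¹ ≤
          (a j * ∏ k ∈ univ.erase j, (x k)⁻¹) ^ p * (a j * ∏ k ∈ univ.erase j, (y k)⁻¹) ^ q := by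
      intro j
      rcases eq_or_lt_of_le (ha j) with h0 | h0
      · rw [← h0]
        simp [Real.zero_rpow hp.ne', Real.zero_rpow hq.ne']
      · have hprodle : ∏ k ∈ univ.erase j, ((p • x + q • y) k)⁻¹ ≤
            (∏ k ∈ univ.erase j, (x k)⁻¹) ^ p * (∏ k ∈ univ.erase j, (y k)⁻¹) ^ q := by
          calc ∏ k ∈ univ.erase j, ((p • x + q • y) k)⁻¹
              ≤ ∏ k ∈ univ.erase j, (((x k)⁻¹) ^ p * ((y k)⁻¹) ^ q) := by
                refine Finset.prod_le_prod (fun k _ => inv_nonneg.2 (hz k).le) fun k _ => h1 k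
            _ = (∏ k ∈ univ.erase j, (x k)⁻¹) ^ p * (∏ k ∈ univ.erase j, (y k)⁻¹) ^ q := by
                rw [Finset.prod_mul_distrib,
                  Real.finset_prod_rpow _ _ (fun k _ => inv_nonneg.2 (hx k).le),
                  Real.finset_prod_rpow _ _ (fun k _ => inv_nonneg.2 (hy k).le)]
        have haj : a j = a j ^ p * a j ^ q := by
          rw [← Real.rpow_add h0, hpq, Real.rpow_one]
        calc a j * ∏ k ∈ univ.erase j, ((p • x + q • y) k)⁻¹
            ≤ a j * ((∏ k ∈ univ.erase j, (x k)⁻¹) ^ p * (∏ k ∈ univ.erase j, (y k)⁻¹) ^ q) :=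
              mul_le_mul_of_nonneg_left hprodle h0.le
          _ = (a j * ∏ k ∈ univ.erase j, (x k)⁻¹) ^ p * (a j * ∏ k ∈ univ.erase j, (y k)⁻¹) ^ q := by
              rw [Real.mul_rpow h0.le (Finset.prod_nonneg fun k _ => inv_nonneg.2 (hx k).le),
                Real.mul_rpow h0.le (Finset.prod_nonneg fun k _ => inv_nonneg.2 (hy k).le)]
              rw [show a j ^ p * (∏ k ∈ univ.erase j, (x k)⁻¹) ^ p *
                  (a j ^ q * (∏ k ∈ univ.erase j, (y k)⁻¹) ^ q) =
                  (a j ^ p * a j ^ q) * ((∏ k ∈ univ.erase j, (x k)⁻¹) ^ p *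
                  (∏ k ∈ univ.erase j, (y k)⁻¹) ^ q) from by ring, ← haj]
    have hmain : S (p • x + q • y) ≤ S x ^ p * S y ^ q := by
      calc S (p • x + q • y) ≤ ∑ j, (a j * ∏ k ∈ univ.erase j, (x k)⁻¹) ^ p *
            (a j * ∏ k ∈ univ.erase j, (y k)⁻¹) ^ q := Finset.sum_le_sum fun j _ => hterm j
        _ ≤ S x ^ p * S y ^ q :=
            holder2 _ _ _ (fun j _ => hSnn x hx j) (fun j _ => hSnn y hy j)
              (hSpos x hx) (hSpos y hy) hp hq hpq
    have := Real.log_le_log (hSpos _ hz) hmain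
    calc Real.log (S (p • x + q • y)) ≤ Real.log (S x ^ p * S y ^ q) := this
      _ = p • Real.log (S x) + q • Real.log (S y) := by
          rw [Real.log_mul (Real.rpow_pos_of_pos (hSpos x hx) p).ne'
            (Real.rpow_pos_of_pos (hSpos y hy) q).ne',
            Real.log_rpow (hSpos x hx), Real.log_rpow (hSpos y hy)]
          simp [smul_eq_mul]
  exact hconv.congr fun x hx => (hid x hx).symm ▸ rfl


theorem poisson_loglik_rel_smooth_log_barrier {m n : ℕ}
    (A : Matrix (Fin m) (Fin n) ℝ) (hA : ∀ i j, 0 ≤ A i j)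
    (hrows : ∀ i, ∃ j, A i j ≠ 0)
    (b : Fin m → ℝ) (hb : ∀ i, 0 < b i) :
    ConvexOn ℝ {x : Fin n → ℝ | ∀ j, 0 < x j}
      (fun x =>
        (∑ i, b i) * (-∑ j, Real.log (x j)) -
          ∑ i, (b i * Real.log (b i / (A.mulVec x i)) - b i + A.mulVec x i)) := by
  set s : Set (Fin n → ℝ) := {x | ∀ j, 0 < x j} with hs_def
  have hs : Convex ℝ s := convex_posOrthant n
  have hP : ∀ x ∈ s, ∀ i, (0:ℝ) < ∑ j, A i j * x j := by
    intro x hx i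
    obtain ⟨j0, hj0⟩ := hrows i
    exact Finset.sum_pos' (fun j _ => mul_nonneg (hA i j) (hx j).le)
      ⟨j0, Finset.mem_univ _, mul_pos ((hA i j0).lt_of_ne (Ne.symm hj0)) (hx j0)⟩
  have h1 : ConvexOn ℝ s
      (fun x => ∑ i, b i * (Real.log (∑ j, A i j * x j) - ∑ j, Real.log (x j))) :=
    convexOn_finset_sum hs _ _ fun i _ => by
      simpa [smul_eq_mul] using ((key_convex (A i) (hA i) (hrows i)).smul (hb i).le)
  have h2 : ConvexOn ℝ s
      (fun x => (∑ i, (b i - b i * Real.log (b i))) - ∑ i, ∑ j, A i j * x j) := by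
    refine ⟨hs, ?_⟩
    intro x hx y hy p q hp hq hpq
    apply le_of_eq
    have hlin : ∑ i, ∑ j, A i j * ((p • x + q • y) j)
        = p * (∑ i, ∑ j, A i j * x j) + q * (∑ i, ∑ j, A i j * y j) := by
      simp only [Pi.add_apply, Pi.smul_apply, smul_eq_mul, mul_add, Finset.sum_add_distrib,
        Finset.mul_sum]
      congr 1 <;>
        exact Finset.sum_congr rfl fun i _ => Finset.sum_congr rfl fun j _ => by ring
    simp only [smul_eq_mul, hlin]
    have hq1 : q = 1 - p := by linarith
    subst hq1; ring
  refine (h1.add h2).congr fun x hx => ?_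
  show _ = _
  simp only [Pi.add_apply, Matrix.mulVec, dotProduct]
  rw [Finset.sum_congr rfl fun i (_ : i ∈ Finset.univ) =>
    show b i * Real.log (b i / ∑ j, A i j * x j) - b i + ∑ j, A i j * x j
      = b i * Real.log (b i) - b i * Real.log (∑ j, A i j * x j) - b i + ∑ j, A i j * x j from by
        rw [Real.log_div (hb i).ne' (hP x hx i).ne']; ring]
  simp only [mul_sub, mul_neg, Finset.sum_sub_distrib, Finset.sum_add_distrib, ← Finset.sum_mul]
  ring
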